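/- The quartic form g^λ = x³y + y³z + z³x + t⁴ + λ xyzt over an algebraically closed field k of characteristic zero is singular if and only if (λ/4)⁴ = 1, i.e., λ⁴ = 256. -/
import Mathlib


open MvPolynomial

/-- A quartic form in `k[x,y,z,t]` is singular if its four partial derivatives have a common
zero in `k⁴ \ {0}`, i.e. the projective surface `V(f) ⊆ ℙ³(k)` has a singular point. -/
def MvPolynomial.IsSingularForm {k : Type*} [CommRing k] (f : MvPolynomial (Fin 4) k) : Prop :=
  ∃ p : Fin 4 → k, p ≠ 0 ∧ ∀ i : Fin 4, eval p (pderiv i f) = 0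

private lemma cube_zero {k : Type*} [Field k] {a : k} (h : a ^ 3 = 0) : a = 0 :=
  pow_eq_zero_iff (by norm_num) |>.mp h

private lemma aux_forward {k : Type*} [Field k] [CharZero k] (l x y z t : k)
    (e0 : y * (3 * x ^ 2) + z ^ 3 + l * (t * (z * y)) = 0)
    (e1 : x ^ 3 + z * (3 * y ^ 2) + l * (t * (z * x)) = 0)
    (e2 : y ^ 3 + x * (3 * z ^ 2) + l * (t * (x * y)) = 0)
    (e3 : 4 * t ^ 3 + l * (x * y * z) = 0)
    (hne : ¬(x = 0 ∧ y = 0 ∧ z = 0 ∧ t = 0)) : l ^ 4 = 256 := by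
  have hx : x ≠ 0 := by
    intro h0
    have hy : y = 0 := cube_zero (by linear_combination e2 + (-(3*z^2) - l*t*y) * h0)
    have hz : z = 0 := cube_zero (by linear_combination e0 + (-(3*x^2) - l*t*z) * hy)
    have ht : t = 0 := cube_zero (by linear_combination e3/4 + (-(l*y*z)/4) * h0)
    exact hne ⟨h0, hy, hz, ht⟩
  have hy : y ≠ 0 := by
    intro h0
    have hz : z = 0 := cube_zero (by linear_combination e0 + (-(3*x^2) - l*t*z) * h0)
    have hx0 : x = 0 := cube_zero (by linear_combination e1 + (-(3*y^2) - l*t*x) * hz)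
    have ht : t = 0 := cube_zero (by linear_combination e3/4 + (-(l*x*z)/4) * h0)
    exact hne ⟨hx0, h0, hz, ht⟩
  have hz : z ≠ 0 := by
    intro h0
    have hx0 : x = 0 := cube_zero (by linear_combination e1 + (-(3*y^2) - l*t*x) * h0)
    have hy0 : y = 0 := cube_zero (by linear_combination e2 + (-(3*z^2) - l*t*y) * hx0)
    have ht : t = 0 := cube_zero (by linear_combination e3/4 + (-(l*y*z)/4) * hx0)
    exact hne ⟨hx0, hy0, h0, ht⟩
  have hxyz : x * y * z ≠ 0 := mul_ne_zero (mul_ne_zero hx hy) hz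
  have ht : t ≠ 0 := by
    intro h0
    have hl0 : l = 0 := by
      have h' : l * (x * y * z) = 0 := by linear_combination e3 + (-(4*t^2)) * h0
      exact (mul_eq_zero.mp h').resolve_right hxyz
    have F1 : 3*x^2*y + z^3 = 0 := by linear_combination e0 - (t*(z*y)) * hl0
    have F2 : x^3 + 3*y^2*z = 0 := by linear_combination e1 - (t*(z*x)) * hl0
    have F3 : y^3 + 3*z^2*x = 0 := by linear_combination e2 - (t*(x*y)) * hl0
    have h28 : (28:k) * (x*y*z)^3 = 0 := by
      linear_combination (y^3*z^3) * F2 + (9*x*y^2*z^3) * F1 + (-(3*y^2*z^4)) * F3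
    have : (x*y*z)^3 = 0 := by
      rcases mul_eq_zero.mp h28 with h | h
      · exact absurd h (by norm_num)
      · exact h
    exact hxyz (cube_zero this)
  have ha : x^3*y = -(l*(x*y*z*t))/4 := by
    linear_combination (9*x/28) * e0 + (y/28) * e1 + (-(3*z)/28) * e2
  have hb : y^3*z = -(l*(x*y*z*t))/4 := by
    linear_combination (9*y/28) * e1 + (z/28) * e2 + (-(3*x)/28) * e0
  have hc : z^3*x = -(l*(x*y*z*t))/4 := by
    linear_combination (9*z/28) * e2 + (x/28) * e0 + (-(3*y)/28) * e1
  have ht4 : t^4 = -(l*(x*y*z*t))/4 := by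
    linear_combination (t/4) * e3
  have key : 256 * (x*y*z*t)^4 = l^4 * (x*y*z*t)^4 := by
    rw [show (256:k) * (x*y*z*t)^4 = 256 * ((x^3*y) * (y^3*z) * (z^3*x) * t^4) from by ring,
      ha, hb, hc, ht4]
    ring
  have hP : (x*y*z*t)^4 ≠ 0 := pow_ne_zero _ (mul_ne_zero hxyz ht)
  exact (mul_right_cancel₀ hP key).symm

/-- the quartic form `g^λ = x³y + y³z + z³x + t⁴ + λxyzt` is singular iff
`(λ/4)⁴ = 1`, i.e. `λ⁴ = 256`. -/
theorem stmt_13 {k : Type*} [Field k] [IsAlgClosed k] [CharZero k] (l : k) :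
    (X 0 ^ 3 * X 1 + X 1 ^ 3 * X 2 + X 2 ^ 3 * X 0 + X 3 ^ 4 +
        C l * (X 0 * X 1 * X 2 * X 3) : MvPolynomial (Fin 4) k).IsSingularForm ↔
      l ^ 4 = 256 := by
  constructor
  · rintro ⟨p, hp, h⟩
    have e0 := h 0
    have e1 := h 1
    have e2 := h 2
    have e3 := h 3
    simp [pderiv_mul, pderiv_pow, pderiv_X, Pi.single_apply] at e0 e1 e2 e3
    refine aux_forward l (p 0) (p 1) (p 2) (p 3) e0 e1 e2 e3 ?_
    rintro ⟨h0, h1, h2, h3⟩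
    apply hp
    funext i
    fin_cases i <;> simpa using by assumption
  · intro hl
    have hl0 : l ≠ 0 := by
      intro h; rw [h] at hl; norm_num at hl
    refine ⟨![1, 1, 1, -(4/l)], ?_, ?_⟩
    · intro hc
      have := congrFun hc 0
      simp at this
    · intro i
      fin_cases i <;>
        simp [pderiv_mul, pderiv_pow, pderiv_X, Pi.single_apply] <;>
        field_simp <;>
        first
        | linear_combination hl
        | linear_combination -hl
        | linear_combination 2*hl
        | linear_combination -2*hl
        | ring
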